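/- Let A be a quasi-ideal automaton. Then the relation ρ on S defined by s ρ t iff s, t ∈ Im_A(e) for some idempotent [e]_A ∈ E(A) of the minimal transition ideal is an automaton congruence, and the quotient automaton A/ρ is a synchronizing strongly connected automaton; moreover every idempotent e of I(A) acts as a reset word on A/ρ. -/

import Mathlib

/-- Extended transition function of an automaton: the action of a word on a state. -/
def run {S Alph : Type*} (δ : S → Alph → S) (s : S) (x : List Alph) : S :=
  x.foldl δ s

/-- Single-letter transition of the direct product automaton. -/
def prodStep {S T Alph : Type*} (δ : S → Alph → S) (γ : T → Alph → T) :
    S × T → Alph → S × T :=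
  fun p a => (δ p.1 a, γ p.2 a)

/-- An automaton is strongly connected if every state reaches every state. -/
def StronglyConnected {S Alph : Type*} (δ : S → Alph → S) : Prop :=
  ∀ s t : S, ∃ x : List Alph, run δ s x = t

/-- A word is a reset input function if it sends every state to one fixed state. -/
def IsReset {S Alph : Type*} (δ : S → Alph → S) (x : List Alph) : Prop :=
  ∃ t : S, ∀ s : S, run δ s x = t

/-- A synchronizing automaton has at least one reset input function. -/
def Synchronizing {S Alph : Type*} (δ : S → Alph → S) : Prop :=
  ∃ x : List Alph, IsReset δ x

/-- A permutation automaton: every input word acts bijectively on the states. -/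
def PermutationAut {S Alph : Type*} (δ : S → Alph → S) : Prop :=
  ∀ x : List Alph, Function.Bijective (fun s : S => run δ s x)

/-- The range `Im_A(x)` of the input function given by the word `x`. -/
def Im {S Alph : Type*} (δ : S → Alph → S) (x : List Alph) : Set S :=
  Set.range fun s : S => run δ s x

/-- The rank of a word: cardinality of its range. -/
noncomputable def wordRank {S Alph : Type*} (δ : S → Alph → S) (x : List Alph) : ℕ :=
  (Im δ x).ncard

/-- `[x]_A` lies in the minimal ideal `I(A)` of the transition semigroup:
`x` is a nonempty word of minimal rank among nonempty words. -/
def InMinIdeal {S Alph : Type*} (δ : S → Alph → S) (x : List Alph) : Prop :=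
  x ≠ [] ∧ ∀ y : List Alph, y ≠ [] → wordRank δ x ≤ wordRank δ y

/-- `x ≡_A y` : the words `x` and `y` act equally on every state. -/
def ActEq {S Alph : Type*} (δ : S → Alph → S) (x y : List Alph) : Prop :=
  ∀ s : S, run δ s x = run δ s y

/-- `[e]_A` is an idempotent element of the minimal ideal `I(A)`. -/
def IdemMin {S Alph : Type*} (δ : S → Alph → S) (e : List Alph) : Prop :=
  InMinIdeal δ e ∧ ActEq δ (e ++ e) e

/-- The minimal ideal `I(A)` is right simple: for all `a, b ∈ I(A)` there is
`c ∈ I(A)` with `ac = b`. -/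
def RightSimpleMin {S Alph : Type*} (δ : S → Alph → S) : Prop :=
  ∀ a b : List Alph, InMinIdeal δ a → InMinIdeal δ b →
    ∃ c : List Alph, InMinIdeal δ c ∧ ActEq δ (a ++ c) b

/-- The minimal ideal `I(A)` is a right group: right simple with an idempotent. -/
def RightGroupMin {S Alph : Type*} (δ : S → Alph → S) : Prop :=
  RightSimpleMin δ ∧ ∃ e : List Alph, IdemMin δ e

/-- The ranges of the idempotents of `I(A)` form a partition of the state set. -/
def IdemPartition {S Alph : Type*} (δ : S → Alph → S) : Prop :=
  (∀ s : S, ∃ e : List Alph, IdemMin δ e ∧ s ∈ Im δ e) ∧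
  ∀ e f : List Alph, IdemMin δ e → IdemMin δ f →
    Im δ e ∩ Im δ f = ∅ ∨ Im δ e = Im δ f

/-- A quasi-ideal automaton. -/
def QuasiIdeal {S Alph : Type*} (δ : S → Alph → S) : Prop :=
  StronglyConnected δ ∧ RightGroupMin δ ∧ IdemPartition δ

/-- An automaton congruence: an equivalence relation on states compatible with
the action of every word. -/
def AutCongruence {S Alph : Type*} (δ : S → Alph → S) (r : S → S → Prop) : Prop :=
  Equivalence r ∧ ∀ s t : S, r s t → ∀ z : List Alph, r (run δ s z) (run δ t z)

/-- The congruence `π` : `s π t` iff `sx = tx` for every `[x]_A ∈ I(A)`. -/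
def piRel {S Alph : Type*} (δ : S → Alph → S) (s t : S) : Prop :=
  ∀ x : List Alph, InMinIdeal δ x → run δ s x = run δ t x

/-- The congruence `ρ` : `s ρ t` iff `s, t ∈ Im_A(e)` for some `[e]_A ∈ E(A)`. -/
def rhoRel {S Alph : Type*} (δ : S → Alph → S) (s t : S) : Prop :=
  ∃ e : List Alph, IdemMin δ e ∧ s ∈ Im δ e ∧ t ∈ Im δ e

section Aux
variable {S Alph : Type*}

lemma run_append (δ : S → Alph → S) (s : S) (x y : List Alph) :
    run δ s (x ++ y) = run δ (run δ s x) y := List.foldl_append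

lemma Im_append (δ : S → Alph → S) (x z : List Alph) :
    Im δ (x ++ z) = (fun t => run δ t z) '' Im δ x := by
  ext u
  constructor
  · rintro ⟨p, rfl⟩
    exact ⟨run δ p x, ⟨p, rfl⟩, (run_append δ p x z).symm⟩
  · rintro ⟨v, ⟨p, rfl⟩, rfl⟩
    exact ⟨p, run_append δ p x z⟩

/-- Word power by concatenation. -/
def wpow (x : List Alph) : ℕ → List Alph
  | 0 => []
  | n + 1 => wpow x n ++ x

lemma run_wpow (δ : S → Alph → S) (x : List Alph) (n : ℕ) (s : S) :
    run δ s (wpow x n) = (fun t => run δ t x)^[n] s := by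
  induction n generalizing s with
  | zero => rfl
  | succ n ih => rw [wpow, run_append, ih, Function.iterate_succ_apply']

lemma exists_idem_iterate [Finite S] (g : S → S) :
    ∃ n, 0 < n ∧ ∀ s, g^[n] (g^[n] s) = g^[n] s := by
  obtain ⟨a, b, hne, heq⟩ := Finite.exists_ne_map_eq_of_infinite (fun n : ℕ => g^[n])
  suffices H : ∀ m k : ℕ, 0 < k → g^[m] = g^[m + k] →
      ∃ n, 0 < n ∧ ∀ s, g^[n] (g^[n] s) = g^[n] s by
    rcases Nat.lt_or_gt_of_ne hne with hab | hab
    · exact H a (b - a) (by omega) (by simpa [Nat.add_sub_cancel' hab.le] using heq)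
    · exact H b (a - b) (by omega) (by simpa [Nat.add_sub_cancel' hab.le] using heq.symm)
  intro m k hk heq
  have step : ∀ r, m ≤ r → g^[r + k] = g^[r] := by
    intro r hr
    obtain ⟨d, rfl⟩ := Nat.exists_eq_add_of_le hr
    funext s
    have h1 : m + d + k = d + (m + k) := by omega
    rw [h1, Function.iterate_add_apply, ← heq, ← Function.iterate_add_apply, Nat.add_comm d m]
  have step2 : ∀ j r, m ≤ r → g^[r + j * k] = g^[r] := by
    intro j
    induction j with
    | zero => simp
    | succ j ih =>
      intro r hr
      have h1 : r + (j + 1) * k = (r + j * k) + k := by ring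
      rw [h1, step (r + j * k) (by omega), ih r hr]
  refine ⟨(m + 1) * k, by positivity, fun s => ?_⟩
  have hm : m ≤ (m + 1) * k := le_trans (by omega) (Nat.le_mul_of_pos_right (m + 1) hk)
  rw [← Function.iterate_add_apply, step2 (m + 1) ((m + 1) * k) hm]

lemma minIdeal_append [Finite S] (δ : S → Alph → S) {x : List Alph}
    (hx : InMinIdeal δ x) (z : List Alph) : InMinIdeal δ (x ++ z) := by
  have hne : x ++ z ≠ [] := fun h => hx.1 (List.append_eq_nil_iff.mp h).1
  refine ⟨hne, fun y hy => le_trans ?_ (hx.2 y hy)⟩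
  rw [wordRank, wordRank, Im_append]
  exact Set.ncard_image_le (Set.toFinite _)

lemma exists_idem_im [Finite S] (δ : S → Alph → S) {x : List Alph} (hx : InMinIdeal δ x) :
    ∃ f : List Alph, IdemMin δ f ∧ Im δ f = Im δ x := by
  obtain ⟨n, hn, hidem⟩ := exists_idem_iterate (fun s => run δ s x)
  obtain ⟨m, rfl⟩ : ∃ m, n = m + 1 := ⟨n - 1, by omega⟩
  refine ⟨wpow x (m + 1), ?_⟩
  have hrun : ∀ s, run δ s (wpow x (m + 1)) = (fun t => run δ t x)^[m + 1] s :=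
    run_wpow δ x (m + 1)
  have hsub : Im δ (wpow x (m + 1)) ⊆ Im δ x := by
    rintro u ⟨p, rfl⟩
    show run δ p (wpow x (m + 1)) ∈ Im δ x
    rw [hrun, Function.iterate_succ_apply']
    exact ⟨(fun t => run δ t x)^[m] p, rfl⟩
  have hne : wpow x (m + 1) ≠ [] := by
    rw [wpow]
    exact fun h => hx.1 (List.append_eq_nil_iff.mp h).2
  have hrank : wordRank δ (wpow x (m + 1)) ≤ wordRank δ x :=
    Set.ncard_le_ncard hsub (Set.toFinite _)
  have hIm : Im δ (wpow x (m + 1)) = Im δ x :=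
    Set.eq_of_subset_of_ncard_le hsub (hx.2 _ hne) (Set.toFinite _)
  refine ⟨⟨⟨hne, fun y hy => le_trans hrank (hx.2 y hy)⟩, fun s => ?_⟩, hIm⟩
  rw [run_append, hrun, hrun]; exact hidem s

end Aux

/-- If `A` is a quasi-ideal automaton, then `ρ` is an automaton congruence, the
quotient `A/ρ` (states are the `ρ`-classes) is synchronizing and strongly
connected, and every idempotent `e` of `I(A)` acts as a reset word on `A/ρ`. -/


theorem stmt11 {S Alph : Type*} [Finite S] (δ : S → Alph → S) (hq : QuasiIdeal δ) :
    AutCongruence δ (rhoRel δ) ∧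
    (∀ s t : S, ∃ x : List Alph, rhoRel δ (run δ s x) t) ∧
    (∃ x : List Alph, ∀ s t : S, rhoRel δ (run δ s x) (run δ t x)) ∧
    (∀ e : List Alph, IdemMin δ e → ∀ s t : S, rhoRel δ (run δ s e) (run δ t e)) := by
  
  obtain ⟨hsc, ⟨_, e0, he0⟩, hpart⟩ := hq
  have refl : ∀ s, rhoRel δ s s := by
    intro s
    obtain ⟨e, he, hs⟩ := hpart.1 s
    exact ⟨e, he, hs, hs⟩
  have part4 : ∀ e : List Alph, IdemMin δ e →
      ∀ s t : S, rhoRel δ (run δ s e) (run δ t e) := by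
    intro e he s t
    exact ⟨e, he, ⟨s, rfl⟩, ⟨t, rfl⟩⟩
  refine ⟨⟨⟨refl, ?_, ?_⟩, ?_⟩, ?_, ⟨e0, part4 e0 he0⟩, part4⟩
  · rintro s t ⟨e, he, hs, ht⟩
    exact ⟨e, he, ht, hs⟩
  · rintro s t u ⟨e, he, hs, ht⟩ ⟨f, hf, ht', hu⟩
    rcases hpart.2 e f he hf with hdis | heqq
    · have : t ∈ Im δ e ∩ Im δ f := ⟨ht, ht'⟩
      rw [hdis] at this
      exact this.elim
    · exact ⟨f, hf, heqq ▸ hs, hu⟩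
  · rintro s t ⟨e, he, ⟨p, rfl⟩, ⟨q, rfl⟩⟩ z
    obtain ⟨f, hf, hIm⟩ := exists_idem_im δ (minIdeal_append δ he.1 z)
    refine ⟨f, hf, ?_, ?_⟩
    · rw [hIm]; exact ⟨p, run_append δ p e z⟩
    · rw [hIm]; exact ⟨q, run_append δ q e z⟩
  · intro s t
    obtain ⟨x, hx⟩ := hsc s t
    exact ⟨x, hx ▸ refl t⟩
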